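/- arXiv:1604.07629 — 4 statements merged into one kernel-verified Lean document; each statement's English description precedes it below -/
import Mathlib

section
/- Let α ∈ ℂ, let A, X be complex p×q matrices with range(A) ⊆ range(X) and null(A) ⊆ null(X), and let z ∈ ℂ with z ≠ α. Then the matrix −(z−α)A⁺X + I_q − A⁺A is invertible, and its inverse equals −(z−α)^{-1}X⁺A + I_q − A⁺A. -/
open Matrix

/-- `Ap` is the Moore-Penrose inverse of `A`. -/
def IsMoorePenrose {p q : ℕ} (A : Matrix (Fin p) (Fin q) ℂ)
    (Ap : Matrix (Fin q) (Fin p) ℂ) : Prop :=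
  A * Ap * A = A ∧ Ap * A * Ap = Ap ∧ (A * Ap)ᴴ = A * Ap ∧ (Ap * A)ᴴ = Ap * A

lemma ext_of_mulVec_eq {m n : ℕ} {M N : Matrix (Fin m) (Fin n) ℂ}
    (h : ∀ v, M *ᵥ v = N *ᵥ v) : M = N := by
  ext i j
  have := congrFun (h (Pi.single j 1)) i
  simpa using this

theorem stmt5 {p q : ℕ} (α : ℂ) (A X : Matrix (Fin p) (Fin q) ℂ)
    (Ap Xp : Matrix (Fin q) (Fin p) ℂ)
    (hA : IsMoorePenrose A Ap) (hX : IsMoorePenrose X Xp)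
    (hran : LinearMap.range A.mulVecLin ≤ LinearMap.range X.mulVecLin)
    (hker : LinearMap.ker A.mulVecLin ≤ LinearMap.ker X.mulVecLin)
    (z : ℂ) (hz : z ≠ α) :
    IsUnit ((-(z - α)) • (Ap * X) + 1 - Ap * A) ∧
    ((-(z - α)) • (Ap * X) + 1 - Ap * A)⁻¹ = (-(z - α)⁻¹) • (Xp * A) + 1 - Ap * A := by
  obtain ⟨hA1, hA2, hA3, hA4⟩ := hA
  obtain ⟨hX1, hX2, hX3, hX4⟩ := hX
  have hc : z - α ≠ 0 := sub_ne_zero.mpr hz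
  -- range condition : X * Xp * A = A
  have h1 : X * Xp * A = A := by
    apply ext_of_mulVec_eq
    intro v
    obtain ⟨w, hw⟩ := hran ⟨v, rfl⟩
    simp only [mulVecLin_apply] at hw
    rw [← mulVec_mulVec, ← hw, mulVec_mulVec, hX1]
  -- kernel condition : X * (Ap * A) = X
  have h2 : X * Ap * A = X := by
    apply ext_of_mulVec_eq
    intro v
    have hker' : (X * (1 - Ap * A)) *ᵥ v = 0 := by
      have hz0 : (A * (1 - Ap * A)) *ᵥ v = 0 := by
        rw [Matrix.mul_sub, Matrix.mul_one, ← Matrix.mul_assoc, hA1, sub_self,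
          Matrix.zero_mulVec]
      have := hker (show (1 - Ap * A) *ᵥ v ∈ LinearMap.ker A.mulVecLin by
        simpa [mulVecLin_apply, mulVec_mulVec] using hz0)
      simpa [mulVecLin_apply, mulVec_mulVec] using this
    rw [Matrix.mul_sub, Matrix.mul_one, Matrix.sub_mulVec, sub_eq_zero] at hker'
    rw [Matrix.mul_assoc]
    exact hker'.symm
  -- derived : Ap * A * (Xp * X) = Xp * X
  have h3 : Ap * A * (Xp * X) = Xp * X := by
    have key2 : Xp * X * (Ap * A) = Xp * X := by
      rw [Matrix.mul_assoc, ← Matrix.mul_assoc X Ap A, h2]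
    calc Ap * A * (Xp * X) = ((Xp * X) * (Ap * A))ᴴ := by
          rw [conjTranspose_mul, hA4, hX4]
      _ = (Xp * X)ᴴ := by rw [key2]
      _ = Xp * X := hX4
  -- derived : Ap * A * (Xp * A) = Xp * A
  have h4 : Ap * A * (Xp * A) = Xp * A := by
    have : Xp * A = Xp * X * (Xp * A) := by
      rw [Matrix.mul_assoc, ← Matrix.mul_assoc X Xp A, h1]
    rw [this, ← Matrix.mul_assoc, h3]
  -- derived : Ap * X * (Ap * A) = Ap * X
  have h5 : Ap * X * (Ap * A) = Ap * X := by
    rw [Matrix.mul_assoc, ← Matrix.mul_assoc X Ap A, h2]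
  -- key product
  have key : ((-(z - α)) • (Ap * X) + 1 - Ap * A) *
      ((-(z - α)⁻¹) • (Xp * A) + 1 - Ap * A) = 1 := by
    have e1 : (Ap * X) * (Xp * A) = Ap * A := by
      rw [Matrix.mul_assoc, ← Matrix.mul_assoc X Xp A, h1]
    have e2 : (Ap * A) * (Xp * A) = Xp * A := h4
    have e3 : (Ap * A) * (Ap * X) = Ap * X := by
      rw [← Matrix.mul_assoc, hA2]
    have e4 : (Ap * A) * (Ap * A) = Ap * A := by
      rw [← Matrix.mul_assoc, hA2]
    have hcc : (-(z - α)) * (-(z - α)⁻¹) = 1 := by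
      field_simp
    simp only [Matrix.sub_mul, Matrix.mul_sub, Matrix.add_mul, Matrix.mul_add,
      Matrix.one_mul, Matrix.mul_one, Matrix.smul_mul, Matrix.mul_smul,
      e1, e2, e3, e4, h5, smul_smul, hcc, one_smul]
    match_scalars <;> field_simp <;> ring
  exact ⟨(Matrix.isUnit_iff_isUnit_det _).mpr (Matrix.isUnit_det_of_right_inverse key), Matrix.inv_eq_right_inv key⟩
end

section
/- Let α ∈ ℂ, let A, X be complex p×q matrices with range(A) ⊆ range(X) and null(A) ⊆ null(X), and let z ∈ ℂ with z ≠ α. Then ((z−α)X + A)·(−(z−α)A⁺X + I_q − A⁺A)^{-1} = −A·(I_q + (z−α)^{-1}X⁺A). Moreover, the range of this matrix is contained in range(A) and null(A) is contained in its null space. -/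
open Matrix

lemma matrix_ext_mulVec' {m n : ℕ} {M N : Matrix (Fin m) (Fin n) ℂ}
    (h : ∀ v, M.mulVec v = N.mulVec v) : M = N := by
  ext i j
  have := congrFun (h (Pi.single j 1)) i
  simpa using this

theorem stmt7 {p q : ℕ} (α : ℂ) (A X : Matrix (Fin p) (Fin q) ℂ)
    (Ap Xp : Matrix (Fin q) (Fin p) ℂ)
    (hA : IsMoorePenrose A Ap) (hX : IsMoorePenrose X Xp)
    (hran : LinearMap.range A.mulVecLin ≤ LinearMap.range X.mulVecLin)
    (hker : LinearMap.ker A.mulVecLin ≤ LinearMap.ker X.mulVecLin)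
    (z : ℂ) (hz : z ≠ α) :
    ((z - α) • X + A) * ((-(z - α)) • (Ap * X) + 1 - Ap * A)⁻¹
        = -(A * (1 + (z - α)⁻¹ • (Xp * A))) ∧
    LinearMap.range (((z - α) • X + A) * ((-(z - α)) • (Ap * X) + 1 - Ap * A)⁻¹).mulVecLin
        ≤ LinearMap.range A.mulVecLin ∧
    LinearMap.ker A.mulVecLin
        ≤ LinearMap.ker (((z - α) • X + A) * ((-(z - α)) • (Ap * X) + 1 - Ap * A)⁻¹).mulVecLin := by
  obtain ⟨hA1, hA2, hA3, hA4⟩ := hA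
  obtain ⟨hX1, hX2, hX3, hX4⟩ := hX
  set w : ℂ := z - α with hwdef
  have hw : w ≠ 0 := sub_ne_zero.mpr hz
  have hww : w * w⁻¹ = 1 := mul_inv_cancel₀ hw
  -- range A ⊆ range X gives X * Xp * A = A
  have hXXpA : X * Xp * A = A := by
    apply matrix_ext_mulVec'
    intro v
    obtain ⟨u, hu⟩ := hran ⟨v, rfl⟩
    simp only [mulVecLin_apply] at hu
    calc (X * Xp * A).mulVec v = X.mulVec (Xp.mulVec (A.mulVec v)) := by
          simp [← mulVec_mulVec]
      _ = (X * Xp * X).mulVec u := by rw [← hu]; simp [← mulVec_mulVec]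
      _ = A.mulVec v := by rw [hX1, hu]
  -- ker A ⊆ ker X gives X * Ap * A = X
  have hXApA : X * Ap * A = X := by
    apply matrix_ext_mulVec'
    intro v
    have h0 : A.mulVec (v - (Ap * A).mulVec v) = 0 := by
      simp [Matrix.mulVec_sub, mulVec_mulVec, ← Matrix.mul_assoc, hA1]
    have h1 : X.mulVec (v - (Ap * A).mulVec v) = 0 := hker h0
    rw [Matrix.mulVec_sub, sub_eq_zero] at h1
    rw [h1]
    simp [← mulVec_mulVec, Matrix.mul_assoc]
  -- Ap * A * Xp = Xp
  have h5 : Xp * X * (Ap * A) = Xp * X := by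
    calc Xp * X * (Ap * A) = Xp * (X * Ap * A) := by simp [Matrix.mul_assoc]
      _ = Xp * X := by rw [hXApA]
  have h6 : Ap * A * (Xp * X) = Xp * X := by
    have h7 := congrArg conjTranspose h5
    rwa [conjTranspose_mul, hA4, hX4] at h7
  have hApAXp : Ap * A * Xp = Xp := by
    calc Ap * A * Xp = Ap * A * (Xp * X * Xp) := by rw [hX2]
      _ = (Ap * A * (Xp * X)) * Xp := by simp [Matrix.mul_assoc]
      _ = Xp * X * Xp := by rw [h6]
      _ = Xp := hX2
  -- the explicit inverse
  have hMN : ((-w) • (Ap * X) + 1 - Ap * A) * (1 - Ap * A - w⁻¹ • (Xp * A)) = 1 := by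
    have e1 : Ap * (X * (Ap * A)) = Ap * X := by
      rw [show X * (Ap * A) = X * Ap * A from (Matrix.mul_assoc X Ap A).symm, hXApA]
    have e2 : Ap * (X * (Xp * A)) = Ap * A := by
      rw [show X * (Xp * A) = X * Xp * A from (Matrix.mul_assoc X Xp A).symm, hXXpA]
    have e3 : Ap * (A * (Ap * A)) = Ap * A := by
      rw [show A * (Ap * A) = A * Ap * A from (Matrix.mul_assoc A Ap A).symm, hA1]
    have e4 : Ap * (A * (Xp * A)) = Xp * A := by
      rw [← Matrix.mul_assoc, ← Matrix.mul_assoc, Matrix.mul_assoc (Ap*A) Xp A,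
        ← Matrix.mul_assoc, hApAXp]
    simp only [Matrix.add_mul, Matrix.sub_mul, Matrix.mul_sub, Matrix.mul_add,
      Matrix.mul_one, Matrix.one_mul, Matrix.smul_mul, Matrix.mul_smul, smul_smul,
      Matrix.mul_assoc, e1, e2, e3, e4]
    simp only [smul_add, smul_sub, smul_smul]
    rw [show w⁻¹ * -w = -1 by field_simp]
    module
  have hinv : ((-w) • (Ap * X) + 1 - Ap * A)⁻¹ = 1 - Ap * A - w⁻¹ • (Xp * A) :=
    inv_eq_right_inv hMN
  have hmain : (w • X + A) * ((-w) • (Ap * X) + 1 - Ap * A)⁻¹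
      = -(A * (1 + w⁻¹ • (Xp * A))) := by
    rw [hinv]
    have f1 : X * (Ap * A) = X := by rw [← Matrix.mul_assoc, hXApA]
    have f2 : X * (Xp * A) = A := by rw [← Matrix.mul_assoc, hXXpA]
    have f3 : A * (Ap * A) = A := by rw [← Matrix.mul_assoc, hA1]
    simp only [Matrix.add_mul, Matrix.sub_mul, Matrix.mul_sub, Matrix.mul_add,
      Matrix.mul_one, Matrix.one_mul, Matrix.smul_mul, Matrix.mul_smul, smul_smul,
      f1, f2, f3]
    simp only [smul_add, smul_smul, inv_mul_cancel₀ hw]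
    module
  refine ⟨hmain, ?_, ?_⟩
  · rw [hmain]
    rintro x ⟨v, rfl⟩
    refine ⟨-((1 + w⁻¹ • (Xp * A)).mulVec v), ?_⟩
    simp [mulVecLin_apply, Matrix.mulVec_neg, Matrix.neg_mulVec, mulVec_mulVec]
    simp [Matrix.mul_add, Matrix.add_mulVec, Matrix.mulVec_add, ← mulVec_mulVec,
      Matrix.smul_mulVec, Matrix.mulVec_smul]
  · rw [hmain]
    intro v hv
    simp only [LinearMap.mem_ker, mulVecLin_apply] at hv ⊢
    have g1 : (A * (Xp * A)).mulVec v = 0 := by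
      rw [← mulVec_mulVec, ← mulVec_mulVec, hv, Matrix.mulVec_zero, Matrix.mulVec_zero]
    rw [Matrix.mul_add, Matrix.mul_one, Matrix.mul_smul, Matrix.neg_mulVec,
      Matrix.add_mulVec, Matrix.smul_mulVec, hv, g1]
    simp
end

section
/- Let A and X be complex p×q matrices with range(A) ⊆ range(X) and null(A) ⊆ null(X), let α ∈ ℝ and z ∈ ℂ with z ≠ α. Set Y = −A(I_q + (z−α)^{-1}X⁺A). Then the matrix −(z−α)^{-1}X⁺A + I_q − A⁺A is invertible with inverse −(z−α)A⁺X + I_q − A⁺A, and −(z−α)^{-1}·A·(I_q + A⁺Y)^{-1} = X. (I.e., applying first the Schur–Stieltjes-type transform and then its inverse transform recovers X.) -/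
open Matrix

theorem stmt9 {p q : ℕ} (A X : Matrix (Fin p) (Fin q) ℂ)
    (Ap Xp : Matrix (Fin q) (Fin p) ℂ)
    (hA : IsMoorePenrose A Ap) (hX : IsMoorePenrose X Xp)
    (hran : LinearMap.range A.mulVecLin ≤ LinearMap.range X.mulVecLin)
    (hker : LinearMap.ker A.mulVecLin ≤ LinearMap.ker X.mulVecLin)
    (α : ℝ) (z : ℂ) (hz : z ≠ (α : ℂ)) :
    IsUnit ((-(z - (α : ℂ))⁻¹) • (Xp * A) + 1 - Ap * A) ∧
    ((-(z - (α : ℂ))⁻¹) • (Xp * A) + 1 - Ap * A)⁻¹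
        = (-(z - (α : ℂ))) • (Ap * X) + 1 - Ap * A ∧
    (-(z - (α : ℂ))⁻¹) •
        (A * (1 + Ap * (-(A * (1 + (z - (α : ℂ))⁻¹ • (Xp * A)))))⁻¹) = X := by
  obtain ⟨hA1, hA2, hA3, hA4⟩ := hA
  obtain ⟨hX1, hX2, hX3, hX4⟩ := hX
  have hw : (z - (α : ℂ)) ≠ 0 := sub_ne_zero.mpr hz
  set w : ℂ := z - (α : ℂ) with hwdef
  have mvext : ∀ (M N : Matrix (Fin p) (Fin q) ℂ),
      (∀ v, M.mulVec v = N.mulVec v) → M = N := by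
    intro M N h
    ext i j
    simpa using congrFun (h (Pi.single j 1)) i
  have h1 : X * Xp * A = A := by
    apply mvext
    intro v
    obtain ⟨u, hu⟩ := hran (LinearMap.mem_range_self A.mulVecLin v)
    simp only [mulVecLin_apply] at hu
    calc (X * Xp * A).mulVec v = (X * Xp).mulVec (A.mulVec v) := by
          rw [mulVec_mulVec]
      _ = (X * Xp).mulVec (X.mulVec u) := by rw [hu]
      _ = (X * Xp * X).mulVec u := by rw [mulVec_mulVec]
      _ = X.mulVec u := by rw [hX1]
      _ = A.mulVec v := hu
  have h2 : X * (Ap * A) = X := by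
    apply mvext
    intro v
    have hk : (Ap * A).mulVec v - v ∈ LinearMap.ker A.mulVecLin := by
      simp only [LinearMap.mem_ker, map_sub, mulVecLin_apply]
      rw [mulVec_mulVec, ← Matrix.mul_assoc, hA1, sub_self]
    have hX0 := hker hk
    simp only [LinearMap.mem_ker, map_sub, mulVecLin_apply] at hX0
    calc (X * (Ap * A)).mulVec v = X.mulVec ((Ap * A).mulVec v) := by
          rw [mulVec_mulVec]
      _ = X.mulVec v := sub_eq_zero.mp hX0
  have hr2 : LinearMap.range X.mulVecLin ≤ LinearMap.range A.mulVecLin := by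
    have k1 := A.mulVecLin.finrank_range_add_finrank_ker
    have k2 := X.mulVecLin.finrank_range_add_finrank_ker
    have k3 := Submodule.finrank_mono hran
    have k4 := Submodule.finrank_mono hker
    have heq : LinearMap.range A.mulVecLin = LinearMap.range X.mulVecLin :=
      Submodule.eq_of_le_of_finrank_eq hran (by omega)
    rw [← heq]
  have h4 : A * Ap * X = X := by
    apply mvext
    intro v
    obtain ⟨u, hu⟩ := hr2 (LinearMap.mem_range_self X.mulVecLin v)
    simp only [mulVecLin_apply] at hu
    calc (A * Ap * X).mulVec v = (A * Ap).mulVec (X.mulVec v) := by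
          rw [mulVec_mulVec]
      _ = (A * Ap).mulVec (A.mulVec u) := by rw [hu]
      _ = (A * Ap * A).mulVec u := by rw [mulVec_mulVec]
      _ = A.mulVec u := by rw [hA1]
      _ = X.mulVec v := hu
  have h1' : X * (Xp * A) = A := by rw [← Matrix.mul_assoc]; exact h1
  have e1 : (Ap * X) * (Xp * A) = Ap * A := by rw [Matrix.mul_assoc, h1']
  have e2 : (Ap * X) * (Ap * A) = Ap * X := by rw [Matrix.mul_assoc, h2]
  have e4 : (Ap * A) * (Ap * A) = Ap * A := by
    rw [Matrix.mul_assoc, ← Matrix.mul_assoc A Ap A, hA1]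
  have e5 : (Xp * A) * (Ap * A) = Xp * A := by
    rw [Matrix.mul_assoc, ← Matrix.mul_assoc A Ap A, hA1]
  have q1 : (Xp * X) * (Ap * A) = Xp * X := by rw [Matrix.mul_assoc, h2]
  have q2 : (Ap * A) * (Xp * X) = Xp * X := by
    have hq := congrArg conjTranspose q1
    simpa only [conjTranspose_mul, hA4, hX4] using hq
  have e3' : Ap * A * Xp = Xp := by
    conv_lhs => rw [← hX2]
    rw [← Matrix.mul_assoc, ← Matrix.mul_assoc, Matrix.mul_assoc (Ap * A) Xp X, q2, hX2]
  have e3 : (Ap * A) * (Xp * A) = Xp * A := by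
    rw [← Matrix.mul_assoc, e3']
  have e6 : (Ap * A) * (Ap * X) = Ap * X := by
    rw [Matrix.mul_assoc, ← Matrix.mul_assoc A Ap X, h4]
  have key : ((-w) • (Ap * X) + 1 - Ap * A) * ((-w⁻¹) • (Xp * A) + 1 - Ap * A) = 1 := by
    simp only [Matrix.sub_mul, Matrix.mul_sub, Matrix.add_mul, Matrix.mul_add,
      smul_mul_assoc, mul_smul_comm, Matrix.one_mul, Matrix.mul_one, smul_smul,
      e1, e2, e3, e4, e5, e6]
    match_scalars <;> field_simp <;> ring
  have hUnit : IsUnit ((-w⁻¹) • (Xp * A) + 1 - Ap * A) := (Matrix.isUnit_iff_isUnit_det _).mpr (Matrix.isUnit_det_of_left_inverse key)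
  have hInv : ((-w⁻¹) • (Xp * A) + 1 - Ap * A)⁻¹ = (-w) • (Ap * X) + 1 - Ap * A :=
    inv_eq_left_inv key
  refine ⟨hUnit, hInv, ?_⟩
  have hB : (1 + Ap * (-(A * (1 + w⁻¹ • (Xp * A)))))
      = (-w⁻¹) • (Xp * A) + 1 - Ap * A := by
    have hin : Ap * (A * (1 + w⁻¹ • (Xp * A))) = Ap * A + w⁻¹ • (Xp * A) := by
      rw [Matrix.mul_add, Matrix.mul_add, Matrix.mul_one, Matrix.mul_smul,
        Matrix.mul_smul, ← Matrix.mul_assoc Ap A (Xp * A), e3]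
    rw [Matrix.mul_neg, hin]
    module
  rw [hB, hInv]
  have hAP : A * (Ap * X) = X := by rw [← Matrix.mul_assoc]; exact h4
  have hAQ : A * (Ap * A) = A := by rw [← Matrix.mul_assoc]; exact hA1
  have hAN : A * ((-w) • (Ap * X) + 1 - Ap * A) = (-w) • X := by
    rw [Matrix.mul_sub, Matrix.mul_add, Matrix.mul_one, Matrix.mul_smul, hAP, hAQ]
    module
  rw [hAN, smul_smul]
  rw [show (-w⁻¹) * (-w) = 1 by field_simp, one_smul]
end

section
/- Let Ω be a nonempty closed subset of ℝ with inf{|inf Ω|, |sup Ω|} < ∞, let m ≥ 1, let s₀,…,s_{m−1} be complex q×q matrices, let s_m be a Hermitian q×q matrix, and let σ be a finite nonnegative Hermitian q×q measure on Ω whose moments satisfy ∫_Ω t^j dσ(t) = s_j for j = 0,…,m−1. If the Stieltjes transform S(w) = ∫_Ω (t−w)^{-1} dσ(t) satisfies lim_{y→∞} (iy)^{m+1}[S(iy) + Σ_{j=0}^{m} (iy)^{-(j+1)}s_j] = 0, then t^m is σ-integrable and ∫_Ω t^m dσ(t) = s_m. -/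
open Matrix MeasureTheory Filter
open scoped ComplexOrder

attribute [local instance] Matrix.normedAddCommGroup Matrix.normedSpace

section Helpers

lemma key_alg (w t : ℂ) (hw : w ≠ 0) (htw : t - w ≠ 0) (m : ℕ) :
    w ^ (m+1) * ((t - w)⁻¹ + ∑ j ∈ Finset.range m, w ^ (-(j+1:ℤ)) * t ^ j)
      = w * t ^ m / (t - w) := by
  have h1 : (∑ j ∈ Finset.range m, t ^ j * w ^ (m - 1 - j)) = (t ^ m - w ^ m) * (t - w)⁻¹ := by
    rw [eq_mul_inv_iff_mul_eq₀ htw]; exact geom_sum₂_mul t w m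
  have h2 : ∀ j ∈ Finset.range m, w ^ (m+1) * (w ^ (-(j+1:ℤ)) * t ^ j)
      = t ^ j * w ^ (m - 1 - j) * w := by
    intro j hj
    have hj' : j < m := Finset.mem_range.mp hj
    have he : w ^ (m + 1) = w ^ (m - 1 - j) * w * w ^ (j+1) := by
      rw [mul_assoc, ← pow_succ', ← pow_add]
      congr 1
      omega
    rw [he, _root_.zpow_neg, show ((j:ℤ)+1) = ((j+1:ℕ):ℤ) from by push_cast; ring, zpow_natCast]
    field_simp
  rw [mul_add, Finset.mul_sum, Finset.sum_congr rfl h2, ← Finset.sum_mul, h1]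
  field_simp
  ring

lemma re_c (y t r : ℝ) :
    ((Complex.I * y * r) / ((t:ℂ) - Complex.I * y)).re = -((y^2 * r) / (t^2 + y^2)) := by
  rcases eq_or_ne (t^2 + y^2) 0 with h | h
  · have hy : y = 0 := by nlinarith [sq_nonneg t, sq_nonneg y]
    simp [hy]
  · rw [Complex.div_re]
    simp [Complex.normSq_apply]
    rw [show (t*t+y*y : ℝ) = t^2+y^2 from by ring, ← neg_div]
    congr 1
    ring

lemma tminusIy_ne (t y : ℝ) (hy : 0 < y) : (t:ℂ) - Complex.I * y ≠ 0 := by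
  intro h
  have := congrArg Complex.im h
  simp at this
  exact hy.ne' this

noncomputable def Wf (n : ℕ) (t : ℝ) : ℝ := (n:ℝ)^2 / (t^2 + (n:ℝ)^2)

lemma Wf_nonneg (n : ℕ) (t : ℝ) : 0 ≤ Wf n t := by
  unfold Wf; positivity

lemma Wf_le_one (n : ℕ) (t : ℝ) : Wf n t ≤ 1 := by
  unfold Wf
  rcases Nat.eq_zero_or_pos n with h | h
  · simp [h]
  · have hn : (0:ℝ) < (n:ℝ)^2 := by positivity
    rw [div_le_one (by nlinarith [sq_nonneg t])]
    nlinarith [sq_nonneg t]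

lemma Wf_mono (t : ℝ) : Monotone fun n : ℕ => Wf n t := by
  intro n k h
  rcases Nat.eq_zero_or_pos n with h0 | h0
  · simp [h0, Wf]; positivity
  · have hn : (0:ℝ) < (n:ℝ)^2 := by positivity
    have hk : (0:ℝ) < (k:ℝ)^2 := by
      have : (0:ℕ) < k := lt_of_lt_of_le h0 h
      positivity
    have hnk : (n:ℝ) ≤ (k:ℝ) := by exact_mod_cast h
    unfold Wf
    rw [div_le_div_iff₀ (by nlinarith [sq_nonneg t]) (by nlinarith [sq_nonneg t])]
    have hsq : (n:ℝ)^2 ≤ (k:ℝ)^2 := by nlinarith [Nat.cast_nonneg (α := ℝ) n]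
    nlinarith [sq_nonneg t]

lemma Wf_tendsto (t : ℝ) : Filter.Tendsto (fun n : ℕ => Wf n t) atTop (nhds 1) := by
  have hsq : Tendsto (fun n : ℕ => ((n:ℝ)^2)) atTop atTop :=
    (tendsto_pow_atTop two_ne_zero).comp tendsto_natCast_atTop_atTop
  have h1 : Tendsto (fun n : ℕ => t^2 / (n:ℝ)^2) atTop (nhds 0) :=
    Tendsto.div_atTop tendsto_const_nhds hsq
  have h2 : Tendsto (fun n : ℕ => t^2 / (t^2 + (n:ℝ)^2)) atTop (nhds 0) := by
    apply squeeze_zero' (Filter.Eventually.of_forall fun n => by positivity)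
      ?_ h1
    filter_upwards [eventually_ge_atTop 1] with n hn
    have hn' : (0:ℝ) < (n:ℝ)^2 := by
      have : (0:ℕ) < n := hn
      positivity
    apply div_le_div_of_nonneg_left (sq_nonneg t) hn'
    nlinarith [sq_nonneg t]
  have h3 : Tendsto (fun n : ℕ => 1 - t^2 / (t^2 + (n:ℝ)^2)) atTop (nhds 1) := by
    simpa using tendsto_const_nhds.sub h2
  apply h3.congr'
  filter_upwards [eventually_ge_atTop 1] with n hn
  have hn' : (0:ℝ) < (n:ℝ)^2 := by
    have : (0:ℕ) < n := hn
    positivity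
  have hd : t^2 + (n:ℝ)^2 ≠ 0 := by nlinarith [sq_nonneg t]
  unfold Wf
  field_simp
  ring

lemma Wf_measurable (n : ℕ) : Measurable (Wf n) := by
  apply Measurable.const_div
  exact (measurable_id.pow_const 2).add_const _

lemma abs_pow_le₁ (a t : ℝ) (h : a ≤ t) (m : ℕ) : |t|^m ≤ t^m + 2*|a|^m := by
  rcases le_or_gt 0 t with ht | ht
  · rw [abs_of_nonneg ht]
    have : (0:ℝ) ≤ |a|^m := by positivity
    linarith
  · have h1 : |t| ≤ |a| := by
      rw [abs_of_neg ht, abs_of_nonpos (le_of_lt (lt_of_le_of_lt h ht))]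
      linarith
    have h2 : |t|^m ≤ |a|^m := pow_le_pow_left₀ (abs_nonneg t) h1 m
    have h3 : -|t|^m ≤ t^m := by
      rw [← abs_pow]; exact neg_abs_le _
    linarith

lemma abs_pow_le₂ (b t : ℝ) (h : t ≤ b) (m : ℕ) : |t|^m ≤ (-1)^m * t^m + 2*|b|^m := by
  have key : |(-t)|^m ≤ (-t)^m + 2*|(-b)|^m := abs_pow_le₁ (-b) (-t) (by linarith) m
  rw [abs_neg, abs_neg] at key
  calc |t|^m ≤ (-t)^m + 2*|b|^m := key
    _ = (-1)^m * t^m + 2*|b|^m := by rw [neg_pow]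


noncomputable def qf (x : Fin q → ℂ) : Matrix (Fin q) (Fin q) ℂ →L[ℂ] ℂ :=
  LinearMap.toContinuousLinearMap
  { toFun := fun A => star x ⬝ᵥ A *ᵥ x
    map_add' := fun A B => by simp [Matrix.add_mulVec, dotProduct_add]
    map_smul' := fun c A => by simp [Matrix.smul_mulVec, dotProduct_smul] }

lemma qf_apply (x : Fin q → ℂ) (A : Matrix (Fin q) (Fin q) ℂ) :
    qf x A = star x ⬝ᵥ A *ᵥ x := rfl

-- bilinear form
noncomputable def bf (u v : Fin q → ℂ) (A : Matrix (Fin q) (Fin q) ℂ) : ℂ :=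
  star u ⬝ᵥ A *ᵥ v

lemma qf_split (u v : Fin q → ℂ) (c : ℂ) (A : Matrix (Fin q) (Fin q) ℂ) :
    qf (u + c • v) A = qf u A + c * bf u v A + (starRingEnd ℂ) c * bf v u A
      + (starRingEnd ℂ) c * c * qf v A := by
  simp only [qf_apply, bf, star_add, star_smul, Matrix.mulVec_add, Matrix.mulVec_smul,
    add_dotProduct, dotProduct_add, smul_dotProduct, dotProduct_smul, smul_eq_mul,
    starRingEnd_apply]
  ring

lemma bf_single (A : Matrix (Fin q) (Fin q) ℂ) (i j : Fin q) :
    bf (Pi.single i 1) (Pi.single j 1) A = A i j := by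
  simp [bf, dotProduct, mulVec, Pi.single_apply, Pi.star_apply, Finset.sum_ite_eq',
    apply_ite, mul_ite, ite_mul]

lemma bf_conj {A : Matrix (Fin q) (Fin q) ℂ} (hA : A.IsHermitian) (u v : Fin q → ℂ) :
    bf v u A = (starRingEnd ℂ) (bf u v A) := by
  simp only [bf, dotProduct, mulVec, dotProduct, map_sum, _root_.map_mul, Finset.mul_sum]
  rw [Finset.sum_comm]
  apply Finset.sum_congr rfl
  intro a _
  apply Finset.sum_congr rfl
  intro b _
  rw [show A a b = star (A b a) from (hA.apply a b).symm]
  simp only [Pi.star_apply, starRingEnd_apply, star_star]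
  ring

variable {q : ℕ}

lemma conj_qf (x : Fin q → ℂ) (A : Matrix (Fin q) (Fin q) ℂ) :
    (starRingEnd ℂ) (qf x A) = star x ⬝ᵥ Aᴴ *ᵥ x := by
  simp only [qf_apply, dotProduct, mulVec, map_sum, _root_.map_mul, Finset.mul_sum]
  rw [Finset.sum_comm]
  apply Finset.sum_congr rfl
  intro i _
  apply Finset.sum_congr rfl
  intro j _
  simp [Matrix.conjTranspose_apply, Pi.star_apply]
  ring

lemma qf_real_of_hermitian (x : Fin q → ℂ) {A : Matrix (Fin q) (Fin q) ℂ}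
    (hA : A.IsHermitian) : qf x A = ((qf x A).re : ℂ) := by
  have h : (starRingEnd ℂ) (qf x A) = qf x A := by
    rw [conj_qf, hA.eq, qf_apply]
  exact (Complex.conj_eq_iff_re.mp h).symm

lemma qf_psd_eq (x : Fin q → ℂ) {A : Matrix (Fin q) (Fin q) ℂ} (hA : A.PosSemidef) :
    qf x A = ((qf x A).re : ℂ) ∧ 0 ≤ (qf x A).re :=
  ⟨qf_real_of_hermitian x hA.1, by
    have := hA.dotProduct_mulVec_nonneg x
    rw [Complex.le_def] at this
    simpa [qf_apply] using this.1⟩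

lemma qf_smul_real (x : Fin q → ℂ) (r : ℝ) (A : Matrix (Fin q) (Fin q) ℂ) :
    qf x (r • A) = (r : ℂ) * qf x A := by
  rw [show (r : ℂ) * qf x A = (r : ℂ) • qf x A from rfl, ← _root_.map_smul]
  congr 1

lemma star_mulVec_dot {q : ℕ} (u : Fin q → ℂ) (A : Matrix (Fin q) (Fin q) ℂ) :
    star (A *ᵥ u) ⬝ᵥ u = (starRingEnd ℂ) (qf u A) := by
  simp only [qf_apply, dotProduct, mulVec, map_sum, _root_.map_mul, Pi.star_apply,
    Finset.mul_sum, Finset.sum_mul, starRingEnd_apply, star_sum, star_mul']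
  apply Finset.sum_congr rfl
  intro i _
  apply Finset.sum_congr rfl
  intro j _
  simp only [star_star]
  ring

lemma rsmul (r : ℝ) (A : Matrix (Fin q) (Fin q) ℂ) : r • A = (r : ℂ) • A := by
  rw [← smul_one_smul ℂ r A, Complex.real_smul, mul_one]

end Helpers

set_option maxHeartbeats 1000000 in
theorem stmt15 {q : ℕ} (m : ℕ) (hm : 1 ≤ m)
    (Ω : Set ℝ) (hclosed : IsClosed Ω) (hne : Ω.Nonempty)
    (hbdd : BddBelow Ω ∨ BddAbove Ω)
    (s : ℕ → Matrix (Fin q) (Fin q) ℂ) (hsm : (s m).IsHermitian)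
    (τ : Measure ℝ) [IsFiniteMeasure τ] (hτ : τ Ωᶜ = 0)
    (D : ℝ → Matrix (Fin q) (Fin q) ℂ)
    (hDmeas : ∀ i j, Measurable fun t => D t i j)
    (hDpsd : ∀ t, (D t).PosSemidef)
    (hDint : @Integrable _ _ SeminormedAddGroup.toContinuousENorm _ _ D τ)
    (hint : ∀ j < m, @Integrable _ _ SeminormedAddGroup.toContinuousENorm _ _ (fun t : ℝ => t ^ j • D t) (τ.restrict Ω))
    (hmom : ∀ j < m, ∫ t in Ω, t ^ j • D t ∂τ = s j)
    (hlim : Tendsto (fun y : ℝ => (Complex.I * y) ^ (m + 1) •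
          ((∫ t in Ω, ((t : ℂ) - Complex.I * y)⁻¹ • D t ∂τ) +
            ∑ j ∈ Finset.range (m + 1), ((Complex.I * y) ^ (-(j + 1 : ℤ))) • s j))
        atTop (nhds 0)) :
    @Integrable _ _ SeminormedAddGroup.toContinuousENorm _ _ (fun t : ℝ => t ^ m • D t) (τ.restrict Ω) ∧
    ∫ t in Ω, t ^ m • D t ∂τ = s m := by
  letI : TopologicalSpace (Matrix (Fin q) (Fin q) ℂ) := PseudoMetricSpace.toUniformSpace.toTopologicalSpace
  have hΩ : MeasurableSet Ω := hclosed.measurableSet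
  have hDr : Integrable D (τ.restrict Ω) := hDint.restrict
  set μ := τ.restrict Ω with hμdef
  -- the scalar weight
  set c : ℝ → ℝ → ℂ := fun y t => (Complex.I * y * ((t^m : ℝ) : ℂ)) / ((t:ℂ) - Complex.I * y)
    with hcdef
  -- pointwise decomposition of the weighted integrand, for y > 0
  have e1 : ∀ y : ℝ, 0 < y → ∀ t : ℝ, c y t • D t
      = (Complex.I * y)^(m+1) • ((((t:ℂ) - Complex.I * y)⁻¹) • D t)
        + ∑ j ∈ Finset.range m,
            ((Complex.I * y)^(m+1) * (Complex.I * y)^(-(j+1:ℤ))) • (t^j • D t) := by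
    intro y hy t
    have hw : Complex.I * y ≠ 0 :=
      mul_ne_zero Complex.I_ne_zero (by exact_mod_cast Complex.ofReal_ne_zero.mpr hy.ne')
    have hkey := key_alg (Complex.I * y) t hw (tminusIy_ne t y hy) m
    have hc1 : c y t = ((Complex.I * y)^(m+1)
        * (((t:ℂ) - Complex.I * y)⁻¹
          + ∑ j ∈ Finset.range m, (Complex.I * y)^(-(j+1:ℤ)) * (t:ℂ)^j)) := by
      rw [hkey, hcdef]
      push_cast
      ring
    rw [hc1, mul_add, Finset.mul_sum, add_smul, Finset.sum_smul]
    congr 1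
    · rw [mul_smul]
    · apply Finset.sum_congr rfl
      intro j _
      rw [rsmul (t^j) (D t), smul_smul]
      push_cast
      ring_nf
  -- integrability of the resolvent integrand
  have hres : ∀ y : ℝ, 0 < y → Integrable (fun t : ℝ => (((t:ℂ) - Complex.I * y)⁻¹) • D t) μ := by
    intro y hy
    have hcont : Continuous fun t : ℝ => (((t:ℂ) - Complex.I * y)⁻¹) :=
      ((Complex.continuous_ofReal.sub continuous_const).inv₀ (fun t => tminusIy_ne t y hy))
    apply Integrable.mono' (hDr.norm.const_mul (y⁻¹))
      (hcont.aestronglyMeasurable.smul hDr.aestronglyMeasurable)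
    filter_upwards with t
    show ‖(((t:ℂ) - Complex.I * y)⁻¹) • D t‖ ≤ y⁻¹ * ‖D t‖
    rw [norm_smul]
    apply mul_le_mul_of_nonneg_right _ (norm_nonneg _)
    rw [norm_inv]
    apply inv_anti₀ hy
    calc y = |((t:ℂ) - Complex.I * y).im| := by
          rw [show ((t:ℂ) - Complex.I * y).im = -y by simp, abs_neg, abs_of_pos hy]
      _ ≤ ‖(t:ℂ) - Complex.I * y‖ := Complex.abs_im_le_norm _
      _ = ‖(t:ℂ) - Complex.I * y‖ := rfl
  -- integrability of the weighted integrand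
  have hcint : ∀ y : ℝ, 0 < y → Integrable (fun t : ℝ => c y t • D t) μ := by
    intro y hy
    have h1 : Integrable (fun t : ℝ =>
        (Complex.I * y)^(m+1) • ((((t:ℂ) - Complex.I * y)⁻¹) • D t)) μ :=
      (hres y hy).smul ((Complex.I * y)^(m+1))
    have h2 : Integrable (fun t : ℝ => ∑ j ∈ Finset.range m,
        ((Complex.I * y)^(m+1) * (Complex.I * y)^(-(j+1:ℤ))) • (t^j • D t)) μ :=
      integrable_finset_sum _ fun j hj => (hint j (Finset.mem_range.mp hj)).smul
        ((Complex.I * y)^(m+1) * (Complex.I * y)^(-(j+1:ℤ)))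
    exact (h1.add h2).congr (Filter.Eventually.of_forall fun t => (e1 y hy t).symm)
  -- value of the weighted integral
  have hcval : ∀ y : ℝ, 0 < y → ∫ t, c y t • D t ∂μ
      = (Complex.I * y)^(m+1) • ((∫ t in Ω, ((t : ℂ) - Complex.I * y)⁻¹ • D t ∂τ)
          + ∑ j ∈ Finset.range m, ((Complex.I * y) ^ (-(j + 1 : ℤ))) • s j) := by
    intro y hy
    have h1 : Integrable (fun t : ℝ =>
        (Complex.I * y)^(m+1) • ((((t:ℂ) - Complex.I * y)⁻¹) • D t)) μ :=
      (hres y hy).smul ((Complex.I * y)^(m+1))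
    have h3 : ∀ j ∈ Finset.range m, Integrable (fun t : ℝ =>
        ((Complex.I * y)^(m+1) * (Complex.I * y)^(-(j+1:ℤ))) • (t^j • D t)) μ :=
      fun j hj => (hint j (Finset.mem_range.mp hj)).smul
        ((Complex.I * y)^(m+1) * (Complex.I * y)^(-(j+1:ℤ)))
    have h2 : Integrable (fun t : ℝ => ∑ j ∈ Finset.range m,
        ((Complex.I * y)^(m+1) * (Complex.I * y)^(-(j+1:ℤ))) • (t^j • D t)) μ :=
      integrable_finset_sum _ h3
    rw [integral_congr_ae (Filter.Eventually.of_forall (e1 y hy)), integral_add h1 h2,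
      integral_finset_sum _ h3, integral_smul, smul_add, Finset.smul_sum]
    congr 1
    apply Finset.sum_congr rfl
    intro j hj
    rw [integral_smul, hmom j (Finset.mem_range.mp hj), smul_smul]
  -- F y = (∫ c y • D) + s m  eventually
  have hFkey : ∀ y : ℝ, 0 < y → (Complex.I * y) ^ (m + 1) •
          ((∫ t in Ω, ((t : ℂ) - Complex.I * y)⁻¹ • D t ∂τ) +
            ∑ j ∈ Finset.range (m + 1), ((Complex.I * y) ^ (-(j + 1 : ℤ))) • s j)
      = (∫ t, c y t • D t ∂μ) + s m := by
    intro y hy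
    have hw : Complex.I * y ≠ 0 :=
      mul_ne_zero Complex.I_ne_zero (by exact_mod_cast Complex.ofReal_ne_zero.mpr hy.ne')
    have hone : (Complex.I * y)^(m+1) * (Complex.I * y)^(-(m+1:ℤ)) = 1 := by
      rw [_root_.zpow_neg, show ((m:ℤ)+1) = ((m+1:ℕ):ℤ) from by push_cast; ring,
        zpow_natCast]
      exact mul_inv_cancel₀ (pow_ne_zero _ hw)
    rw [Finset.sum_range_succ, ← add_assoc, smul_add, hcval y hy, smul_smul, hone, one_smul]
  -- limit of the weighted integrals
  have hJ : Tendsto (fun y : ℝ => ∫ t, c y t • D t ∂μ) atTop (nhds (-(s m))) := by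
    have h0 := hlim.sub_const (s m)
    rw [zero_sub] at h0
    apply h0.congr'
    filter_upwards [eventually_gt_atTop (0:ℝ)] with y hy
    rw [hFkey y hy]
    abel
  have hJn : Tendsto (fun n : ℕ => ∫ t, c n t • D t ∂μ) atTop (nhds (-(s m))) :=
    hJ.comp tendsto_natCast_atTop_atTop
  -- per-vector analysis
  have hxmain : ∀ x : Fin q → ℂ,
      Integrable (fun t => |t|^m * (qf x (D t)).re) μ ∧
      Integrable (fun t => t^m * (qf x (D t)).re) μ ∧
      ∫ t, t^m * (qf x (D t)).re ∂μ = (qf x (s m)).re := by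
    intro x
    set f : ℝ → ℝ := fun t => (qf x (D t)).re with hfdef
    have hf0 : ∀ t, 0 ≤ f t := fun t => (qf_psd_eq x (hDpsd t)).2
    have hfc : ∀ t, qf x (D t) = ((f t : ℝ) : ℂ) := fun t => (qf_psd_eq x (hDpsd t)).1
    have hfmeas : Measurable f := by
      apply Complex.measurable_re.comp
      simp only [qf_apply, dotProduct, mulVec]
      exact Finset.measurable_sum _ fun i _ =>
        ((Finset.measurable_sum _ fun j _ => (hDmeas i j).mul_const _).const_mul _)
    have hfint : Integrable f μ := by
      have h2 : Integrable (fun t => qf x (D t)) μ := (qf x).integrable_comp hDr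
      exact h2.re.congr (Filter.Eventually.of_forall fun t => by
        simp [RCLike.re_to_complex]; rfl)
    have hfm1 : Integrable (fun t => t^(m-1) * f t) μ := by
      have h3 : Integrable (fun t => qf x (t^(m-1) • D t)) μ :=
        (qf x).integrable_comp (hint (m-1) (by omega))
      have h4 : Integrable (fun t => ((t^(m-1) * f t : ℝ) : ℂ)) μ := by
        apply h3.congr (Filter.Eventually.of_forall fun t => ?_)
        show qf x (t ^ (m-1) • D t) = ((t^(m-1) * f t : ℝ) : ℂ)
        rw [qf_smul_real, hfc]
        push_cast
        ring
      exact h4.re.congr (Filter.Eventually.of_forall fun t => by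
        show RCLike.re ((t^(m-1) * f t : ℝ) : ℂ) = t^(m-1) * f t
        simp only [RCLike.re_to_complex, Complex.ofReal_re])
    have habs1 : Integrable (fun t => |t|^(m-1) * f t) μ := by
      apply hfm1.abs.congr (Filter.Eventually.of_forall fun t => ?_)
      show |t ^ (m-1) * f t| = |t| ^ (m-1) * f t
      rw [abs_mul, abs_pow, abs_of_nonneg (hf0 t)]
    -- integrability of the W-weighted functions
    have hWkey : ∀ (n : ℕ) t, Wf n t * |t|^m ≤ ((n:ℝ)/2) * |t|^(m-1) := by
      intro n t
      have hmm : m - 1 + 1 = m := by omega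
      have habs : |t|^m = |t|^(m-1) * |t| := by rw [← pow_succ, hmm]
      rcases Nat.eq_zero_or_pos n with h0 | h0
      · simp [h0, Wf]
      · have hd : (0:ℝ) < t^2 + (n:ℝ)^2 := by
          have : (0:ℝ) < (n:ℝ)^2 := by positivity
          nlinarith [sq_nonneg t]
        rw [Wf, div_mul_eq_mul_div, div_le_iff₀ hd, habs]
        have h2 : 2*(n:ℝ)*|t| ≤ t^2 + (n:ℝ)^2 := by
          nlinarith [sq_nonneg (|t| - n), sq_abs t]
        have h4 : (0:ℝ) ≤ |t|^(m-1) := by positivity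
        have h5 : (0:ℝ) ≤ (n:ℝ) := Nat.cast_nonneg n
        nlinarith [mul_le_mul_of_nonneg_left h2 (mul_nonneg (mul_nonneg (by norm_num : (0:ℝ) ≤ 1/2) h5) h4)]
    have hWint : ∀ n : ℕ, Integrable (fun t => Wf n t * (|t|^m * f t)) μ := by
      intro n
      apply Integrable.mono' (habs1.const_mul ((n:ℝ)/2))
        (((Wf_measurable n).mul ((measurable_abs.pow_const m).mul hfmeas)).aestronglyMeasurable)
      filter_upwards with t
      show ‖Wf n t * (|t|^m * f t)‖ ≤ ((n:ℝ)/2) * (|t|^(m-1) * f t)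
      rw [Real.norm_eq_abs, abs_of_nonneg (mul_nonneg (Wf_nonneg n t)
        (mul_nonneg (by positivity) (hf0 t)))]
      calc Wf n t * (|t|^m * f t) = (Wf n t * |t|^m) * f t := by ring
        _ ≤ (((n:ℝ)/2) * |t|^(m-1)) * f t :=
            mul_le_mul_of_nonneg_right (hWkey n t) (hf0 t)
        _ = ((n:ℝ)/2) * (|t|^(m-1) * f t) := by ring
    have hWtint : ∀ n : ℕ, Integrable (fun t => Wf n t * (t^m * f t)) μ := by
      intro n
      apply (hWint n).mono'
        (((Wf_measurable n).mul ((measurable_id.pow_const m).mul hfmeas)).aestronglyMeasurable)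
      filter_upwards with t
      show |Wf n t * (t^m * f t)| ≤ Wf n t * (|t|^m * f t)
      rw [abs_mul, abs_mul, abs_of_nonneg (Wf_nonneg n t), abs_of_nonneg (hf0 t), abs_pow]
    -- identify the limit of the weighted real integrals
    have haux : ∀ n : ℕ, 1 ≤ n → (qf x (∫ t, c n t • D t ∂μ)).re
        = ∫ t, (-(Wf n t * (t^m * f t))) ∂μ := by
      intro n hn
      have hn' : (0:ℝ) < (n:ℝ) := by exact_mod_cast hn
      rw [show qf x (∫ t, c n t • D t ∂μ) = ∫ t, qf x (c n t • D t) ∂μ from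
        (ContinuousLinearMap.integral_comp_comm _ (hcint n hn')).symm]
      rw [show (∫ t, qf x (c (n:ℝ) t • D t) ∂μ).re
          = RCLike.re (K := ℂ) (∫ t, qf x (c (n:ℝ) t • D t) ∂μ) from rfl,
        show RCLike.re (K := ℂ) (∫ t, qf x (c (n:ℝ) t • D t) ∂μ)
          = ∫ t, RCLike.re (qf x (c (n:ℝ) t • D t)) ∂μ from
          (integral_re ((qf x).integrable_comp (hcint n hn'))).symm]
      apply integral_congr_ae (Filter.Eventually.of_forall fun t => ?_)
      show RCLike.re (qf x (c n t • D t)) = -(Wf n t * (t^m * f t))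
      rw [(qf x).map_smul, smul_eq_mul, hfc t, RCLike.re_to_complex]
      rw [show ((c (n:ℝ) t) * ((f t : ℝ):ℂ)).re = (c (n:ℝ) t).re * f t by
        simp [Complex.mul_re]]
      rw [hcdef]
      show ((Complex.I * (n:ℝ) * ((t^m : ℝ) : ℂ)) / ((t:ℂ) - Complex.I * (n:ℝ))).re * f t = _
      rw [re_c (n:ℝ) t (t^m)]
      rw [Wf]
      ring
    have ha : Tendsto (fun n : ℕ => ∫ t, Wf n t * (t^m * f t) ∂μ) atTop
        (nhds ((qf x (s m)).re)) := by
      have h5 : Tendsto (fun n : ℕ => -(qf x (∫ t, c n t • D t ∂μ)).re) atTop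
          (nhds (-(qf x (-(s m))).re)) := by
        apply Tendsto.neg
        exact (Complex.continuous_re.tendsto _).comp (((qf x).continuous.tendsto _).comp hJn)
      have h6 : -(qf x (-(s m))).re = (qf x (s m)).re := by
        rw [map_neg]
        simp
      rw [h6] at h5
      apply h5.congr'
      filter_upwards [eventually_ge_atTop 1] with n hn
      rw [haux n hn, integral_neg, neg_neg]
    -- uniform bound via one-sided support
    obtain ⟨ε, c0, hc0, hεa⟩ : ∃ (ε : ℝ) (c0 : ℝ), 0 ≤ c0 ∧
        ∀ t ∈ Ω, |t|^m ≤ ε * t^m + 2*c0^m := by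
      rcases hbdd with ⟨a, ha⟩ | ⟨b, hb⟩
      · exact ⟨1, |a|, abs_nonneg a, fun t ht => by simpa using abs_pow_le₁ a t (ha ht) m⟩
      · exact ⟨(-1)^m, |b|, abs_nonneg b, fun t ht => abs_pow_le₂ b t (hb ht) m⟩
    have hbound : ∃ B, ∀ n : ℕ, ∫ t, Wf n t * (|t|^m * f t) ∂μ ≤ B := by
      obtain ⟨B0, hB0⟩ := (ha.const_mul ε).bddAbove_range
      refine ⟨B0 + 2*c0^m * ∫ t, f t ∂μ, fun n => ?_⟩
      have hptwise : ∀ᵐ t ∂μ, Wf n t * (|t|^m * f t)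
          ≤ ε * (Wf n t * (t^m * f t)) + 2*c0^m * f t := by
        filter_upwards [ae_restrict_mem hΩ] with t ht
        have h1 := hεa t ht
        have h2 := Wf_nonneg n t
        have h3 := Wf_le_one n t
        have h4 := hf0 t
        have h5 : Wf n t * (|t|^m * f t) ≤ Wf n t * ((ε * t^m + 2*c0^m) * f t) := by
          apply mul_le_mul_of_nonneg_left _ h2
          exact mul_le_mul_of_nonneg_right h1 h4
        have h6 : (0:ℝ) ≤ c0^m * f t ∨ True := Or.inr trivial
        nlinarith [mul_le_mul_of_nonneg_right h3 (mul_nonneg (by nlinarith [pow_nonneg hc0 m] : (0:ℝ) ≤ (2:ℝ)*c0^m) h4)]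
      calc ∫ t, Wf n t * (|t|^m * f t) ∂μ
          ≤ ∫ t, (ε * (Wf n t * (t^m * f t)) + 2*c0^m * f t) ∂μ :=
            integral_mono_ae (hWint n)
              (((hWtint n).const_mul ε).add (hfint.const_mul (2*c0^m))) hptwise
        _ = ε * (∫ t, Wf n t * (t^m * f t) ∂μ) + 2*c0^m * ∫ t, f t ∂μ := by
            rw [integral_add ((hWtint n).const_mul ε) (hfint.const_mul (2*c0^m)),
              integral_const_mul, integral_const_mul]
        _ ≤ B0 + 2*c0^m * ∫ t, f t ∂μ := by
            have := hB0 (Set.mem_range_self n)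
            exact add_le_add_left this _
    -- monotone convergence: integrability of |t|^m * f
    have hintabs : Integrable (fun t => |t|^m * f t) μ := by
      obtain ⟨B, hB⟩ := hbound
      refine ⟨((measurable_abs.pow_const m).mul hfmeas).aestronglyMeasurable, ?_⟩
      rw [hasFiniteIntegral_iff_ofReal (Filter.Eventually.of_forall fun t =>
        mul_nonneg (by positivity) (hf0 t))]
      have hmono : ∀ t, Monotone fun n : ℕ => ENNReal.ofReal (Wf n t * (|t|^m * f t)) :=
        fun t a b hab => ENNReal.ofReal_le_ofReal
          (mul_le_mul_of_nonneg_right (Wf_mono t hab)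
            (mul_nonneg (by positivity) (hf0 t)))
      have hsup : ∀ t, (⨆ n : ℕ, ENNReal.ofReal (Wf n t * (|t|^m * f t)))
          = ENNReal.ofReal (|t|^m * f t) := by
        intro t
        apply tendsto_nhds_unique (tendsto_atTop_iSup (hmono t))
        have h7 : Tendsto (fun n : ℕ => Wf n t * (|t|^m * f t)) atTop
            (nhds (|t|^m * f t)) := by
          have := (Wf_tendsto t).mul_const (|t|^m * f t)
          simpa using this
        exact (ENNReal.continuous_ofReal.tendsto _).comp h7
      calc ∫⁻ t, ENNReal.ofReal (|t|^m * f t) ∂μ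
          = ∫⁻ t, ⨆ n : ℕ, ENNReal.ofReal (Wf n t * (|t|^m * f t)) ∂μ := by
            apply lintegral_congr fun t => (hsup t).symm
        _ = ⨆ n : ℕ, ∫⁻ t, ENNReal.ofReal (Wf n t * (|t|^m * f t)) ∂μ := by
            apply lintegral_iSup
            · intro n
              exact ((Wf_measurable n).mul
                ((measurable_abs.pow_const m).mul hfmeas)).ennreal_ofReal
            · intro a b hab t
              exact hmono t hab
        _ ≤ ENNReal.ofReal B := by
            apply iSup_le fun n => ?_
            rw [← ofReal_integral_eq_lintegral_ofReal (hWint n)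
              (Filter.Eventually.of_forall fun t => mul_nonneg (Wf_nonneg n t)
                (mul_nonneg (by positivity) (hf0 t)))]
            exact ENNReal.ofReal_le_ofReal (hB n)
        _ < ⊤ := ENNReal.ofReal_lt_top
    have hinttm : Integrable (fun t => t^m * f t) μ := by
      apply hintabs.mono' (((measurable_id.pow_const m).mul hfmeas).aestronglyMeasurable)
      filter_upwards with t
      show |t^m * f t| ≤ |t|^m * f t
      rw [abs_mul, abs_pow, abs_of_nonneg (hf0 t)]
    -- dominated convergence
    have hDCT : Tendsto (fun n : ℕ => ∫ t, Wf n t * (t^m * f t) ∂μ) atTop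
        (nhds (∫ t, t^m * f t ∂μ)) := by
      apply tendsto_integral_of_dominated_convergence (fun t => |t|^m * f t)
        (fun n => (hWtint n).aestronglyMeasurable) hintabs
      · intro n
        filter_upwards with t
        show |Wf n t * (t^m * f t)| ≤ |t|^m * f t
        rw [abs_mul, abs_mul, abs_of_nonneg (Wf_nonneg n t), abs_of_nonneg (hf0 t), abs_pow]
        calc Wf n t * (|t|^m * f t) ≤ 1 * (|t|^m * f t) :=
              mul_le_mul_of_nonneg_right (Wf_le_one n t)
                (mul_nonneg (by positivity) (hf0 t))
          _ = |t|^m * f t := one_mul _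
      · filter_upwards with t
        have := (Wf_tendsto t).mul_const (t^m * f t)
        simpa using this
    exact ⟨hintabs, hinttm, tendsto_nhds_unique hDCT ha⟩

  -- polarization: entries of D in terms of quadratic forms
  have hpol : ∀ (i j : Fin q) (t : ℝ),
      (D t i j).re = ((qf ((Pi.single i 1 : Fin q → ℂ) + (1:ℂ) • (Pi.single j 1 : Fin q → ℂ)) (D t)).re
          - (qf (Pi.single i 1) (D t)).re - (qf (Pi.single j 1) (D t)).re)/2 ∧
      (D t i j).im = -(((qf ((Pi.single i 1 : Fin q → ℂ) + Complex.I • (Pi.single j 1 : Fin q → ℂ)) (D t)).re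
          - (qf (Pi.single i 1) (D t)).re - (qf (Pi.single j 1) (D t)).re)/2) := by
    intro i j t
    have hb1 : bf (Pi.single i 1) (Pi.single j 1) (D t) = D t i j := bf_single _ i j
    have hb2 : bf (Pi.single j 1) (Pi.single i 1) (D t)
        = (starRingEnd ℂ) (D t i j) := by
      rw [bf_conj (hDpsd t).1, hb1]
    have h1 := qf_split (Pi.single i 1) (Pi.single j 1) 1 (D t)
    have h2 := qf_split (Pi.single i 1) (Pi.single j 1) Complex.I (D t)
    rw [hb1, hb2] at h1 h2
    have h1' := congrArg Complex.re h1
    have h2' := congrArg Complex.re h2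
    simp only [Complex.add_re, Complex.mul_re, Complex.one_re, Complex.one_im,
      Complex.conj_re, Complex.conj_im, Complex.I_re, Complex.I_im, _root_.map_one,
      Complex.mul_im] at h1' h2'
    constructor
    · rw [h1']; ring
    · rw [h2']; ring
  -- integrability of the matrix integrand
  have hGint : Integrable (fun t : ℝ => t ^ m • D t) μ := by
    set bnd : Fin q → Fin q → ℝ → ℝ := fun i j t =>
      ((qf ((Pi.single i 1 : Fin q → ℂ) + (1:ℂ) • (Pi.single j 1 : Fin q → ℂ)) (D t)).re
        + (qf ((Pi.single i 1 : Fin q → ℂ) + Complex.I • (Pi.single j 1 : Fin q → ℂ)) (D t)).re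
        + 2 * (qf (Pi.single i 1) (D t)).re + 2 * (qf (Pi.single j 1) (D t)).re)/2
      with hbnddef
    have hbnd : ∀ i j t, ‖D t i j‖ ≤ bnd i j t := by
      intro i j t
      have hre := (hpol i j t).1
      have him := (hpol i j t).2
      have f0 : ∀ x : Fin q → ℂ, 0 ≤ (qf x (D t)).re := fun x => (qf_psd_eq x (hDpsd t)).2
      calc ‖D t i j‖ ≤ |(D t i j).re| + |(D t i j).im| := Complex.norm_le_abs_re_add_abs_im _
        _ ≤ bnd i j t := by
            rw [hre, him, abs_neg, hbnddef]
            have g1 := f0 ((Pi.single i 1 : Fin q → ℂ) + (1:ℂ) • (Pi.single j 1 : Fin q → ℂ))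
            have g2 := f0 ((Pi.single i 1 : Fin q → ℂ) + Complex.I • (Pi.single j 1 : Fin q → ℂ))
            have g3 := f0 (Pi.single i 1)
            have g4 := f0 (Pi.single j 1)
            rw [abs_div, abs_div]
            simp only [abs_two]
            rw [← add_div, div_le_div_iff₀ (by norm_num) (by norm_num)]
            have e1' : |(qf ((Pi.single i 1 : Fin q → ℂ) + (1:ℂ) • (Pi.single j 1 : Fin q → ℂ)) (D t)).re
                - (qf (Pi.single i 1) (D t)).re - (qf (Pi.single j 1) (D t)).re|
                ≤ (qf ((Pi.single i 1 : Fin q → ℂ) + (1:ℂ) • (Pi.single j 1 : Fin q → ℂ)) (D t)).re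
                  + (qf (Pi.single i 1) (D t)).re + (qf (Pi.single j 1) (D t)).re := by
              rw [abs_le]; constructor <;> nlinarith
            have e2' : |(qf ((Pi.single i 1 : Fin q → ℂ) + Complex.I • (Pi.single j 1 : Fin q → ℂ)) (D t)).re
                - (qf (Pi.single i 1) (D t)).re - (qf (Pi.single j 1) (D t)).re|
                ≤ (qf ((Pi.single i 1 : Fin q → ℂ) + Complex.I • (Pi.single j 1 : Fin q → ℂ)) (D t)).re
                  + (qf (Pi.single i 1) (D t)).re + (qf (Pi.single j 1) (D t)).re := by
              rw [abs_le]; constructor <;> nlinarith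
            nlinarith
    have hbint : ∀ i j : Fin q, Integrable (fun t => |t|^m * bnd i j t) μ := by
      intro i j
      have q1 := (hxmain ((Pi.single i 1 : Fin q → ℂ) + (1:ℂ) • (Pi.single j 1 : Fin q → ℂ))).1
      have q2 := (hxmain ((Pi.single i 1 : Fin q → ℂ) + Complex.I • (Pi.single j 1 : Fin q → ℂ))).1
      have q3 := (hxmain (Pi.single i 1)).1
      have q4 := (hxmain (Pi.single j 1)).1
      apply (((q1.add q2).add ((q3.const_mul 2).add (q4.const_mul 2))).div_const 2).congr
      filter_upwards with t
      simp only [Pi.add_apply, Pi.mul_apply, Pi.div_apply, Pi.ofNat_apply]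
      rw [hbnddef]
      ring
    apply Integrable.mono'
      (f := fun t : ℝ => t ^ m • D t)
      (g := fun t => ∑ i : Fin q, ∑ j : Fin q, |t|^m * bnd i j t)
      (integrable_finset_sum _ fun i _ => integrable_finset_sum _ fun j _ => hbint i j)
      (((measurable_id.pow_const m).aestronglyMeasurable).smul hDr.aestronglyMeasurable)
    filter_upwards with t
    have hDn : ‖D t‖ ≤ ∑ i : Fin q, ∑ j : Fin q, bnd i j t := by
      have hnn : (0:ℝ) ≤ ∑ i : Fin q, ∑ j : Fin q, bnd i j t := by
        apply Finset.sum_nonneg fun i _ => Finset.sum_nonneg fun j _ =>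
          le_trans (norm_nonneg _) (hbnd i j t)
      refine (pi_norm_le_iff_of_nonneg hnn).mpr ?_
      intro i
      rw [pi_norm_le_iff_of_nonneg hnn]
      intro j
      calc ‖D t i j‖ ≤ bnd i j t := hbnd i j t
        _ ≤ ∑ j' : Fin q, bnd i j' t := Finset.single_le_sum
            (fun j' _ => le_trans (norm_nonneg (D t i j')) (hbnd i j' t)) (Finset.mem_univ j)
        _ ≤ ∑ i' : Fin q, ∑ j' : Fin q, bnd i' j' t := Finset.single_le_sum
            (f := fun i' => ∑ j' : Fin q, bnd i' j' t)
            (fun i' _ => Finset.sum_nonneg fun j' _ =>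
              le_trans (norm_nonneg (D t i' j')) (hbnd i' j' t)) (Finset.mem_univ i)
    calc ‖t ^ m • D t‖ = |t|^m * ‖D t‖ := by
          rw [norm_smul, Real.norm_eq_abs, abs_pow]
      _ ≤ |t|^m * ∑ i : Fin q, ∑ j : Fin q, bnd i j t :=
          mul_le_mul_of_nonneg_left hDn (by positivity)
      _ = ∑ i : Fin q, ∑ j : Fin q, |t|^m * bnd i j t := by
          rw [Finset.mul_sum]
          exact Finset.sum_congr rfl fun i _ => Finset.mul_sum _ _ _
  refine ⟨hGint, ?_⟩
  -- identification of the integral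
  have hval : ∀ x : Fin q → ℂ, qf x (∫ t, t ^ m • D t ∂μ) = qf x (s m) := by
    intro x
    rw [show qf x (∫ t, t ^ m • D t ∂μ) = ∫ t, qf x (t ^ m • D t) ∂μ from
      (ContinuousLinearMap.integral_comp_comm _ hGint).symm]
    have heq : (fun t : ℝ => qf x (t ^ m • D t))
        = fun t => (((t ^ m * (qf x (D t)).re : ℝ)) : ℂ) := by
      funext t
      rw [qf_smul_real]
      conv_lhs => rw [(qf_psd_eq x (hDpsd t)).1]
      push_cast
      ring
    rw [heq]
    have hOR : ∫ t, (((t ^ m * (qf x (D t)).re : ℝ)) : ℂ) ∂μ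
        = ((∫ t, t ^ m * (qf x (D t)).re ∂μ : ℝ) : ℂ) := integral_ofReal
    rw [hOR, (hxmain x).2.2, ← qf_real_of_hermitian x hsm]
  -- conclude by polarization over ℂ
  apply LinearEquiv.injective (Matrix.toEuclideanLin (𝕜 := ℂ) (m := Fin q) (n := Fin q))
  apply (ext_inner_map _ _).mp
  intro v
  rw [EuclideanSpace.inner_eq_star_dotProduct, EuclideanSpace.inner_eq_star_dotProduct,
    Matrix.piLp_ofLp_toEuclideanLin, Matrix.piLp_ofLp_toEuclideanLin,
    Matrix.toLin'_apply, Matrix.toLin'_apply, dotProduct_comm _ (star _), dotProduct_comm _ (star _),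
    star_mulVec_dot, star_mulVec_dot]
  exact congrArg _ (hval (WithLp.ofLp v))
end
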